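/- Let k, l ≥ 1. Then every T ∈ U(k,l) has an eigenvector v ∈ ℂ^{k+l} \ {0} with ⟨v,v⟩_{k,l} ≤ 0; equivalently, the induced projective transformation of ℙ^{k+l−1} has a fixed point in the closure of the projectivized negative cone { [v] : ⟨v,v⟩_{k,l} < 0 }. -/
import Mathlib


open Matrix

noncomputable section

/-- The Hermitian form `⟨u,v⟩_{k,l} = −∑_{j<k} u_j conj(v_j) + ∑_{j≥k} u_j conj(v_j)`
of signature `(k,l)` on `ℂ^{k+l}` (indices `j < k` are the negative ones). -/
def hform (k l : ℕ) (u v : Fin (k + l) → ℂ) : ℂ :=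
  ∑ j : Fin (k + l),
    if (j : ℕ) < k then -(u j * starRingEnd ℂ (v j)) else u j * starRingEnd ℂ (v j)

namespace Stmt11Aux

variable {k l : ℕ}

lemma hform_eq (u v : Fin (k + l) → ℂ) :
    hform k l u v
      = ∑ j : Fin (k + l), (if (j : ℕ) < k then (-1 : ℂ) else 1) * (u j * starRingEnd ℂ (v j)) := by
  unfold hform
  refine Finset.sum_congr rfl fun j _ => ?_
  split <;> ring

lemma hform_smul_left (c : ℂ) (u v : Fin (k + l) → ℂ) :
    hform k l (c • u) v = c * hform k l u v := by
  simp only [hform_eq, Finset.mul_sum, Pi.smul_apply, smul_eq_mul]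
  refine Finset.sum_congr rfl fun j _ => by ring

lemma hform_smul_right (c : ℂ) (u v : Fin (k + l) → ℂ) :
    hform k l u (c • v) = starRingEnd ℂ c * hform k l u v := by
  simp only [hform_eq, Finset.mul_sum, Pi.smul_apply, smul_eq_mul, RingHom.map_mul]
  refine Finset.sum_congr rfl fun j _ => by ring

lemma hform_add_left (u u' v : Fin (k + l) → ℂ) :
    hform k l (u + u') v = hform k l u v + hform k l u' v := by
  simp only [hform_eq, ← Finset.sum_add_distrib, Pi.add_apply]
  refine Finset.sum_congr rfl fun j _ => by ring

lemma hform_add_right (u v v' : Fin (k + l) → ℂ) :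
    hform k l u (v + v') = hform k l u v + hform k l u v' := by
  simp only [hform_eq, ← Finset.sum_add_distrib, Pi.add_apply, map_add]
  refine Finset.sum_congr rfl fun j _ => by ring

lemma hform_zero_left (v : Fin (k + l) → ℂ) : hform k l 0 v = 0 := by
  simp [hform_eq]

lemma hform_zero_right (v : Fin (k + l) → ℂ) : hform k l v 0 = 0 := by
  simp [hform_eq]

lemma hform_sum_left {ι : Type*} (s : Finset ι) (a : ι → Fin (k + l) → ℂ)
    (v : Fin (k + l) → ℂ) :
    hform k l (∑ i ∈ s, a i) v = ∑ i ∈ s, hform k l (a i) v := by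
  induction s using Finset.cons_induction with
  | empty => simp [hform_zero_left]
  | cons i s hi ih => simp [Finset.sum_cons, hform_add_left, ih]

lemma hform_sum_right {ι : Type*} (s : Finset ι) (a : ι → Fin (k + l) → ℂ)
    (v : Fin (k + l) → ℂ) :
    hform k l v (∑ i ∈ s, a i) = ∑ i ∈ s, hform k l v (a i) := by
  induction s using Finset.cons_induction with
  | empty => simp [hform_zero_right]
  | cons i s hi ih => simp [Finset.sum_cons, hform_add_right, ih]

end Stmt11Aux

open Stmt11Aux

/-- Every `T ∈ U(k,l)` has an eigenvector `v ≠ 0` with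
`⟨v,v⟩_{k,l} ≤ 0` (the form takes real values on the diagonal, so this is expressed
via the real part); equivalently the induced projective map fixes a point of the
closure of the projectivized negative cone. -/
theorem stmt11 (k l : ℕ) (hk : 1 ≤ k) (hl : 1 ≤ l) (T : GL (Fin (k + l)) ℂ)
    (hU : ∀ u v : Fin (k + l) → ℂ,
      hform k l ((T : Matrix (Fin (k + l)) (Fin (k + l)) ℂ).mulVec u)
        ((T : Matrix (Fin (k + l)) (Fin (k + l)) ℂ).mulVec v) = hform k l u v) :
    ∃ v : Fin (k + l) → ℂ, v ≠ 0 ∧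
      (∃ μ : ℂ, (T : Matrix (Fin (k + l)) (Fin (k + l)) ℂ).mulVec v = μ • v) ∧
      (hform k l v v).re ≤ 0 := by
  classical
  by_contra hcon
  push_neg at hcon
  -- H : every eigenvector has strictly positive form
  have H : ∀ v : Fin (k + l) → ℂ, v ≠ 0 →
      (∃ μ : ℂ, (T : Matrix (Fin (k + l)) (Fin (k + l)) ℂ).mulVec v = μ • v) →
      0 < (hform k l v v).re := fun v h1 h2 => hcon v h1 h2
  set M : Matrix (Fin (k + l)) (Fin (k + l)) ℂ := (T : Matrix (Fin (k + l)) (Fin (k + l)) ℂ)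
  set f : Module.End ℂ (Fin (k + l) → ℂ) := M.mulVecLin with hf
  have hfapp : ∀ v, f v = M.mulVec v := fun v => rfl
  -- Key facts about eigenvectors
  have keyA : ∀ (μ : ℂ) (v : Fin (k + l) → ℂ), f v = μ • v → v ≠ 0 →
      0 < (hform k l v v).re ∧ μ * starRingEnd ℂ μ = 1 := by
    intro μ v hv hv0
    have hpos : 0 < (hform k l v v).re := H v hv0 ⟨μ, by rw [← hfapp, hv]⟩
    refine ⟨hpos, ?_⟩
    have h1 := hU v v
    rw [← hfapp, hv, hform_smul_left, hform_smul_right] at h1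
    have hne : hform k l v v ≠ 0 := fun h => by simp [h] at hpos
    have h2 : (μ * starRingEnd ℂ μ - 1) * hform k l v v = 0 := by linear_combination h1
    rcases mul_eq_zero.mp h2 with h | h
    · exact sub_eq_zero.mp h
    · exact absurd h hne
  -- Key fact B : ker (f - μ)^2 ≤ ker (f - μ)
  have keyB : ∀ (μ : ℂ) (x : Fin (k + l) → ℂ),
      (((f - μ • 1 : Module.End ℂ (Fin (k + l) → ℂ)) ^ 2) x = 0) → (f - μ • 1) x = 0 := by
    intro μ x hx
    by_contra hv0
    set v : Fin (k + l) → ℂ := (f - μ • 1) x with hv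
    have hgv : (f - μ • 1) v = 0 := by
      have h2 : ((f - μ • 1 : Module.End ℂ (Fin (k + l) → ℂ)) ^ 2) x
          = (f - μ • 1) ((f - μ • 1) x) := by
        rw [pow_two, Module.End.mul_apply]
      rw [h2] at hx; exact hx
    have hfv : f v = μ • v := by
      have := hgv
      simp only [LinearMap.sub_apply, LinearMap.smul_apply, Module.End.one_apply,
        sub_eq_zero] at this
      exact this
    obtain ⟨hpos, hmu⟩ := keyA μ v hfv hv0
    have hfx : f x = μ • x + v := by
      have h3 : f x - μ • x = v := by
        rw [hv]; simp [LinearMap.sub_apply, LinearMap.smul_apply, Module.End.one_apply]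
      linear_combination (norm := module) h3
    have h1 := hU x v
    rw [← hfapp x, ← hfapp v, hfx, hfv, hform_add_left, hform_smul_left, hform_smul_right,
      hform_smul_right] at h1
    have hvv : starRingEnd ℂ μ * hform k l v v = 0 := by
      linear_combination h1 - hform k l x v * hmu
    have hcne : starRingEnd ℂ μ ≠ 0 := by
      intro h; rw [h, mul_zero] at hmu; exact one_ne_zero hmu.symm
    have : hform k l v v = 0 := by
      rcases mul_eq_zero.mp hvv with h | h
      · exact absurd h hcne
      · exact h
    rw [this] at hpos; simp at hpos
  -- Key fact C : generalized eigenspaces are ordinary eigenspaces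
  have keyC : ∀ μ : ℂ, f.maxGenEigenspace μ ≤ f.eigenspace μ := by
    intro μ x hx
    rw [Module.End.maxGenEigenspace] at hx
    rw [Module.End.mem_genEigenspace_top] at hx
    obtain ⟨m, hm⟩ := hx
    rw [LinearMap.mem_ker] at hm
    have claim : ∀ (m : ℕ) (y : Fin (k + l) → ℂ),
        ((f - μ • 1) ^ m) y = 0 → (f - μ • 1) y = 0 := by
      intro m
      induction m with
      | zero => intro y hy; simp only [pow_zero, Module.End.one_apply] at hy
                rw [hy]; exact map_zero _
      | succ n ih =>
          intro y hy
          have h1 : ((f - μ • 1) ^ n) ((f - μ • 1) y) = 0 := by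
            rw [← Module.End.mul_apply, ← pow_succ]; exact hy
          have h2 := ih _ h1
          exact keyB μ y (by rw [pow_two, Module.End.mul_apply]; exact h2)
    have := claim m x hm
    rw [Module.End.mem_eigenspace_iff]
    simp only [LinearMap.sub_apply, LinearMap.smul_apply, Module.End.one_apply,
      sub_eq_zero] at this
    exact this
  -- orthogonality of distinct eigenspaces
  have orth : ∀ (μ ν : ℂ) (u v : Fin (k + l) → ℂ), μ ≠ ν →
      f u = μ • u → f v = ν • v → hform k l u v = 0 := by
    intro μ ν u v hne hu hv
    by_cases hu0 : u = 0
    · rw [hu0]; exact hform_zero_left v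
    by_cases hv0 : v = 0
    · rw [hv0]; exact hform_zero_right u
    obtain ⟨_, hmu⟩ := keyA μ u hu hu0
    obtain ⟨_, hnu⟩ := keyA ν v hv hv0
    have h1 := hU u v
    rw [← hfapp u, ← hfapp v, hu, hv, hform_smul_left, hform_smul_right] at h1
    have h2 : (μ * starRingEnd ℂ ν - 1) * hform k l u v = 0 := by linear_combination h1
    rcases mul_eq_zero.mp h2 with h | h
    · exfalso
      have h3 : μ * starRingEnd ℂ ν = 1 := sub_eq_zero.mp h
      have h4 : (μ - ν) * starRingEnd ℂ ν = 0 := by linear_combination h3 - hnu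
      rcases mul_eq_zero.mp h4 with h5 | h5
      · exact hne (sub_eq_zero.mp h5)
      · rw [h5, mul_zero] at hnu; exact one_ne_zero hnu.symm
    · exact h
  -- eigenspaces span everything
  have htop : (⨆ μ : ℂ, f.eigenspace μ) = ⊤ := by
    apply top_unique
    rw [← Module.End.iSup_maxGenEigenspace_eq_top f]
    exact iSup_mono keyC
  -- decompose the first basis vector
  have h0k : (0 : ℕ) < k + l := by omega
  set i0 : Fin (k + l) := ⟨0, h0k⟩ with hi0
  set e0 : Fin (k + l) → ℂ := Pi.single i0 1 with he0def
  have he0 : e0 ∈ ⨆ μ : ℂ, f.eigenspace μ := htop ▸ Submodule.mem_top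
  rw [Submodule.mem_iSup_iff_exists_finsupp] at he0
  obtain ⟨c, hc, hsum⟩ := he0
  have hsum' : ∑ μ ∈ c.support, c μ = e0 := hsum
  -- the form is nonnegative on e0
  have hnn : 0 ≤ (hform k l e0 e0).re := by
    rw [← hsum', hform_sum_left, Complex.re_sum]
    apply Finset.sum_nonneg
    intro μ hμ
    rw [hform_sum_right]
    rw [Finset.sum_eq_single_of_mem μ hμ]
    · by_cases h : c μ = 0
      · rw [h, hform_zero_left]; simp
      · have heig : f (c μ) = μ • c μ := Module.End.mem_eigenspace_iff.mp (hc μ)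
        exact le_of_lt (keyA μ (c μ) heig h).1
    · intro ν _ hνμ
      exact orth μ ν (c μ) (c ν) (Ne.symm hνμ)
        (Module.End.mem_eigenspace_iff.mp (hc μ)) (Module.End.mem_eigenspace_iff.mp (hc ν))
  -- but the form is -1 on e0
  have hneg : hform k l e0 e0 = -1 := by
    rw [hform_eq]
    rw [Finset.sum_eq_single i0]
    · have : (i0 : ℕ) < k := by rw [hi0]; exact hk
      simp [this, he0def]
    · intro j _ hj
      have : e0 j = 0 := Pi.single_eq_of_ne hj 1
      rw [this]; simp
    · intro h; exact absurd (Finset.mem_univ i0) h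
  rw [hneg] at hnn
  norm_num at hnn
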